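/- Let B > 0 and ω_i, ω_j > 0 with 2ω_i < B and 2ω_j < B. Let F_i and F_j be independent real random variables uniformly distributed on [ω_i, B − ω_i] and [ω_j, B − ω_j], respectively. Then for every real x: P(|F_i − F_j| ≤ x) = 0 if x < 0; P(|F_i − F_j| ≤ x) = 2x/(B − 2·min(ω_i, ω_j)) if 0 ≤ x < |ω_j − ω_i|; P(|F_i − F_j| ≤ x) = (−x² + 2x(B − ω_j − ω_i) − (ω_j − ω_i)²)/((B − 2ω_i)(B − 2ω_j)) if |ω_j − ω_i| ≤ x < B − ω_i − ω_j; and P(|F_i − F_j| ≤ x) = 1 if x ≥ B − ω_j − ω_i. -/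

import Mathlib

open MeasureTheory ProbabilityTheory Set

-- abbreviation for the target set
lemma nbfi_S_meas (x : ℝ) : MeasurableSet {p : ℝ × ℝ | |p.1 - p.2| ≤ x} := by
  have : Continuous fun p : ℝ × ℝ => |p.1 - p.2| := (continuous_fst.sub continuous_snd).abs
  exact (isClosed_le this continuous_const).measurableSet

lemma nbfi_smul_prod_apply (c d : ENNReal) (μ ν : Measure ℝ) [SFinite μ] [SFinite ν]
    {S : Set (ℝ × ℝ)} (hS : MeasurableSet S) :
    ((c • μ).prod (d • ν)) S = c * (d * (μ.prod ν S)) := by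
  rw [Measure.prod_apply hS, lintegral_smul_measure, Measure.prod_apply hS]
  congr 1
  simp_rw [Measure.smul_apply, smul_eq_mul]
  rw [lintegral_const_mul _ (measurable_measure_prodMk_left hS)]

lemma nbfi_swap (μ ν : Measure ℝ) [SFinite μ] [SFinite ν] (x : ℝ) :
    μ.prod ν {p : ℝ × ℝ | |p.1 - p.2| ≤ x} = ν.prod μ {p : ℝ × ℝ | |p.1 - p.2| ≤ x} := by
  rw [← Measure.prod_swap, Measure.map_apply measurable_swap (nbfi_S_meas x)]
  congr 1
  ext p
  simp [Prod.swap, abs_sub_comm]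

lemma nbfi_cont (b c x : ℝ) :
    Continuous fun a : ℝ => max 0 (min (a + x) c - max (a - x) b) :=
  continuous_const.max (((continuous_id.add continuous_const).min continuous_const).sub
    ((continuous_id.sub continuous_const).max continuous_const))

lemma nbfi_M_eq (B ωi ωj x : ℝ) (hi : ωi ≤ B - ωi) :
    (volume.restrict (Icc ωi (B - ωi))).prod (volume.restrict (Icc ωj (B - ωj)))
      {p : ℝ × ℝ | |p.1 - p.2| ≤ x}
    = ENNReal.ofReal (∫ a in ωi..(B - ωi),
        max 0 (min (a + x) (B - ωj) - max (a - x) ωj)) := by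
  rw [Measure.prod_apply (nbfi_S_meas x)]
  have h1 : ∀ a : ℝ, (Prod.mk a ⁻¹' {p : ℝ × ℝ | |p.1 - p.2| ≤ x}) = Icc (a - x) (a + x) := by
    intro a
    ext b
    simp only [mem_preimage, mem_setOf_eq, mem_Icc, abs_le]
    constructor <;> (rintro ⟨h1, h2⟩; constructor <;> linarith)
  have h2 : ∀ a : ℝ,
      (volume.restrict (Icc ωj (B - ωj))) (Icc (a - x) (a + x))
        = ENNReal.ofReal (max 0 (min (a + x) (B - ωj) - max (a - x) ωj)) := by
    intro a
    rw [Measure.restrict_apply measurableSet_Icc, Icc_inter_Icc, Real.volume_Icc]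
    rcases le_total (min (a + x) (B - ωj) - max (a - x) ωj) 0 with h | h
    · rw [max_eq_left h, ENNReal.ofReal_of_nonpos h, ENNReal.ofReal_zero]
    · rw [max_eq_right h]
  simp_rw [h1, h2]
  rw [← MeasureTheory.ofReal_integral_eq_lintegral_ofReal
      ((nbfi_cont ωj (B - ωj) x).integrableOn_Icc)
      (Filter.Eventually.of_forall fun a => le_max_left _ _)]
  rw [intervalIntegral.integral_of_le hi, integral_Icc_eq_integral_Ioc]

lemma nbfi_lin (u v C : ℝ) : ∫ a in u..v, (a + C) = (v ^ 2 - u ^ 2) / 2 + (v - u) * C := by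
  rw [intervalIntegral.integral_add intervalIntegral.intervalIntegrable_id
    (intervalIntegrable_const), integral_id, intervalIntegral.integral_const]
  simp [smul_eq_mul]

lemma nbfi_lin2 (u v C : ℝ) : ∫ a in u..v, (C - a) = (v - u) * C - (v ^ 2 - u ^ 2) / 2 := by
  rw [intervalIntegral.integral_sub intervalIntegrable_const
    intervalIntegral.intervalIntegrable_id, integral_id, intervalIntegral.integral_const]
  simp [smul_eq_mul]

lemma nbfi_int3 (B ωi ωj x : ℝ) (hωi : 0 < ωi) (hωj : 0 < ωj)
    (hBi : 2 * ωi < B) (hBj : 2 * ωj < B) (hij : ωi ≤ ωj)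
    (hx1 : ωj - ωi ≤ x) (hx2 : x < B - ωi - ωj) :
    ∫ a in ωi..(B - ωi), max 0 (min (a + x) (B - ωj) - max (a - x) ωj)
      = -x ^ 2 + 2 * x * (B - ωj - ωi) - (ωj - ωi) ^ 2 := by
  set q := min (ωj + x) (B - ωj - x) with hq
  have hx0 : 0 ≤ x := le_trans (by linarith) hx1
  have hq1 : q ≤ ωj + x := min_le_left _ _
  have hq2 : q ≤ B - ωj - x := min_le_right _ _
  have hq3 : ωi ≤ q := le_min (by linarith) (by linarith)
  have hq4 : q ≤ B - q := by
    have := add_le_add hq1 hq2; linarith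
  have hint : ∀ u v : ℝ,
      IntervalIntegrable (fun a => max 0 (min (a + x) (B - ωj) - max (a - x) ωj)) volume u v :=
    fun u v => (nbfi_cont _ _ _).intervalIntegrable _ _
  rw [← intervalIntegral.integral_add_adjacent_intervals (a := ωi) (b := q) (c := B - ωi)
    (hint _ _) (hint _ _),
    ← intervalIntegral.integral_add_adjacent_intervals (a := q) (b := B - q) (c := B - ωi)
    (hint _ _) (hint _ _)]
  have e1 : ∫ a in ωi..q, max 0 (min (a + x) (B - ωj) - max (a - x) ωj)
      = ∫ a in ωi..q, (a + (x - ωj)) := by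
    refine intervalIntegral.integral_congr fun a ha => ?_
    rw [uIcc_of_le hq3] at ha
    obtain ⟨ha1, ha2⟩ := ha
    rw [min_eq_left (by linarith), max_eq_right (by linarith : a - x ≤ ωj),
      max_eq_right (by linarith)]
    ring
  have e2 : ∫ a in q..(B - q), max 0 (min (a + x) (B - ωj) - max (a - x) ωj)
      = ∫ a in q..(B - q), (fun _ => q + x - ωj) a := by
    refine intervalIntegral.integral_congr fun a ha => ?_
    rw [uIcc_of_le hq4] at ha
    obtain ⟨ha1, ha2⟩ := ha
    rcases le_total (ωj + x) (B - ωj - x) with h | h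
    · have hqe : q = ωj + x := min_eq_left h
      rw [hqe] at ha1 ha2
      rw [min_eq_left (by linarith), max_eq_left (by linarith : ωj ≤ a - x),
        max_eq_right (by linarith)]
      rw [hqe]; ring
    · have hqe : q = B - ωj - x := min_eq_right h
      rw [hqe] at ha1 ha2
      rw [min_eq_right (by linarith), max_eq_right (by linarith : a - x ≤ ωj),
        max_eq_right (by linarith)]
      rw [hqe]; ring
  have e3 : ∫ a in (B - q)..(B - ωi), max 0 (min (a + x) (B - ωj) - max (a - x) ωj)
      = ∫ a in (B - q)..(B - ωi), ((B - ωj + x) - a) := by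
    refine intervalIntegral.integral_congr fun a ha => ?_
    rw [uIcc_of_le (by linarith : B - q ≤ B - ωi)] at ha
    obtain ⟨ha1, ha2⟩ := ha
    rw [min_eq_right (by linarith), max_eq_left (by linarith : ωj ≤ a - x),
      max_eq_right (by linarith)]
    ring
  rw [e1, e2, e3, nbfi_lin, nbfi_lin2, intervalIntegral.integral_const, smul_eq_mul]
  rcases le_total (ωj + x) (B - ωj - x) with h | h
  · rw [hq, min_eq_left h]; ring
  · rw [hq, min_eq_right h]; ring

lemma nbfi_int2 (B ωi ωj x : ℝ) (hωj : 0 < ωj)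
    (hBj : 2 * ωj < B) (hij : ωi ≤ ωj)
    (hx0 : 0 ≤ x) (hx1 : x ≤ ωj - ωi) :
    ∫ a in ωi..(B - ωi), max 0 (min (a + x) (B - ωj) - max (a - x) ωj)
      = 2 * x * (B - 2 * ωj) := by
  set q := min (ωj + x) (B - ωj - x) with hq
  have hq1 : q ≤ ωj + x := min_le_left _ _
  have hq2 : q ≤ B - ωj - x := min_le_right _ _
  have hq3 : ωj - x ≤ q := le_min (by linarith) (by linarith)
  have hq4 : q ≤ B - q := by
    have := add_le_add hq1 hq2; linarith
  have hint : ∀ u v : ℝ,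
      IntervalIntegrable (fun a => max 0 (min (a + x) (B - ωj) - max (a - x) ωj)) volume u v :=
    fun u v => (nbfi_cont _ _ _).intervalIntegrable _ _
  rw [← intervalIntegral.integral_add_adjacent_intervals (a := ωi) (b := ωj - x) (c := B - ωi)
      (hint _ _) (hint _ _),
    ← intervalIntegral.integral_add_adjacent_intervals (a := ωj - x) (b := q) (c := B - ωi)
      (hint _ _) (hint _ _),
    ← intervalIntegral.integral_add_adjacent_intervals (a := q) (b := B - q) (c := B - ωi)
      (hint _ _) (hint _ _),
    ← intervalIntegral.integral_add_adjacent_intervals (a := B - q) (b := B - ωj + x)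
      (c := B - ωi) (hint _ _) (hint _ _)]
  have e1 : ∫ a in ωi..(ωj - x), max 0 (min (a + x) (B - ωj) - max (a - x) ωj)
      = ∫ a in ωi..(ωj - x), (fun _ => (0 : ℝ)) a := by
    refine intervalIntegral.integral_congr fun a ha => ?_
    rw [uIcc_of_le (by linarith)] at ha
    obtain ⟨ha1, ha2⟩ := ha
    rw [min_eq_left (by linarith), max_eq_right (by linarith : a - x ≤ ωj),
      max_eq_left (by linarith)]
  have e2 : ∫ a in (ωj - x)..q, max 0 (min (a + x) (B - ωj) - max (a - x) ωj)
      = ∫ a in (ωj - x)..q, (a + (x - ωj)) := by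
    refine intervalIntegral.integral_congr fun a ha => ?_
    rw [uIcc_of_le hq3] at ha
    obtain ⟨ha1, ha2⟩ := ha
    rw [min_eq_left (by linarith), max_eq_right (by linarith : a - x ≤ ωj),
      max_eq_right (by linarith)]
    ring
  have e3 : ∫ a in q..(B - q), max 0 (min (a + x) (B - ωj) - max (a - x) ωj)
      = ∫ a in q..(B - q), (fun _ => q + x - ωj) a := by
    refine intervalIntegral.integral_congr fun a ha => ?_
    rw [uIcc_of_le hq4] at ha
    obtain ⟨ha1, ha2⟩ := ha
    rcases le_total (ωj + x) (B - ωj - x) with h | h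
    · have hqe : q = ωj + x := min_eq_left h
      rw [hqe] at ha1 ha2
      rw [min_eq_left (by linarith), max_eq_left (by linarith : ωj ≤ a - x),
        max_eq_right (by linarith)]
      rw [hqe]; ring
    · have hqe : q = B - ωj - x := min_eq_right h
      rw [hqe] at ha1 ha2
      rw [min_eq_right (by linarith), max_eq_right (by linarith : a - x ≤ ωj),
        max_eq_right (by linarith)]
      rw [hqe]; ring
  have e4 : ∫ a in (B - q)..(B - ωj + x), max 0 (min (a + x) (B - ωj) - max (a - x) ωj)
      = ∫ a in (B - q)..(B - ωj + x), ((B - ωj + x) - a) := by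
    refine intervalIntegral.integral_congr fun a ha => ?_
    rw [uIcc_of_le (by linarith)] at ha
    obtain ⟨ha1, ha2⟩ := ha
    rw [min_eq_right (by linarith), max_eq_left (by linarith : ωj ≤ a - x),
      max_eq_right (by linarith)]
    ring
  have e5 : ∫ a in (B - ωj + x)..(B - ωi), max 0 (min (a + x) (B - ωj) - max (a - x) ωj)
      = ∫ a in (B - ωj + x)..(B - ωi), (fun _ => (0 : ℝ)) a := by
    refine intervalIntegral.integral_congr fun a ha => ?_
    rw [uIcc_of_le (by linarith)] at ha
    obtain ⟨ha1, ha2⟩ := ha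
    rw [min_eq_right (by linarith), max_eq_left (by linarith : ωj ≤ a - x),
      max_eq_left (by linarith)]
  rw [e1, e2, e3, e4, e5, nbfi_lin, nbfi_lin2, intervalIntegral.integral_const,
    intervalIntegral.integral_const, intervalIntegral.integral_const, smul_eq_mul,
    smul_eq_mul, smul_eq_mul]
  rcases le_total (ωj + x) (B - ωj - x) with h | h
  · rw [hq, min_eq_left h]; ring
  · rw [hq, min_eq_right h]; ring


lemma nbfi_final (c d T : ℝ) (hc : 0 < c) (hd : 0 < d) :
    (ENNReal.ofReal c)⁻¹ * ((ENNReal.ofReal d)⁻¹ * ENNReal.ofReal T)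
      = ENNReal.ofReal (T / (c * d)) := by
  rw [ENNReal.ofReal_div_of_pos (mul_pos hc hd), ENNReal.ofReal_mul hc.le, div_eq_mul_inv,
    ENNReal.mul_inv (Or.inl (ENNReal.ofReal_pos.2 hc).ne') (Or.inl ENNReal.ofReal_ne_top)]
  ring

/-- CDF of the central-frequency difference of two simultaneously transmitted
narrow packets, whose central frequencies are independent and uniform on
`[ω_i, B - ω_i]` and `[ω_j, B - ω_j]`: case 4, equation (12) of the paper. -/
theorem stmt3 {Ω : Type*} [MeasurableSpace Ω] (P : Measure Ω)
    [IsProbabilityMeasure P]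
    (B ωi ωj : ℝ) (hωi : 0 < ωi) (hωj : 0 < ωj)
    (hBi : 2 * ωi < B) (hBj : 2 * ωj < B)
    (Fi Fj : Ω → ℝ) (hFi : Measurable Fi) (hFj : Measurable Fj)
    (hindep : IndepFun Fi Fj P)
    (hunifi : Measure.map Fi P =
      (ENNReal.ofReal (B - 2 * ωi))⁻¹ • volume.restrict (Set.Icc ωi (B - ωi)))
    (hunifj : Measure.map Fj P =
      (ENNReal.ofReal (B - 2 * ωj))⁻¹ • volume.restrict (Set.Icc ωj (B - ωj)))
    (x : ℝ) :
    (x < 0 → P {a | |Fi a - Fj a| ≤ x} = 0) ∧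
    (0 ≤ x → x < |ωj - ωi| →
      P {a | |Fi a - Fj a| ≤ x} =
        ENNReal.ofReal (2 * x / (B - 2 * min ωi ωj))) ∧
    (|ωj - ωi| ≤ x → x < B - ωi - ωj →
      P {a | |Fi a - Fj a| ≤ x} =
        ENNReal.ofReal ((-x ^ 2 + 2 * x * (B - ωj - ωi) - (ωj - ωi) ^ 2) /
          ((B - 2 * ωi) * (B - 2 * ωj)))) ∧
    (B - ωj - ωi ≤ x → P {a | |Fi a - Fj a| ≤ x} = 1) := by
  have hci : 0 < B - 2 * ωi := by linarith
  have hcj : 0 < B - 2 * ωj := by linarith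
  have hred : P {a | |Fi a - Fj a| ≤ x}
      = (ENNReal.ofReal (B - 2 * ωi))⁻¹ * ((ENNReal.ofReal (B - 2 * ωj))⁻¹ *
        ((volume.restrict (Set.Icc ωi (B - ωi))).prod (volume.restrict (Set.Icc ωj (B - ωj)))
          {p : ℝ × ℝ | |p.1 - p.2| ≤ x})) := by
    have h0 : {a | |Fi a - Fj a| ≤ x}
        = (fun a => (Fi a, Fj a)) ⁻¹' {p : ℝ × ℝ | |p.1 - p.2| ≤ x} := rfl
    rw [h0, ← Measure.map_apply (hFi.prodMk hFj) (nbfi_S_meas x),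
      (indepFun_iff_map_prod_eq_prod_map_map hFi.aemeasurable hFj.aemeasurable).1 hindep,
      hunifi, hunifj, nbfi_smul_prod_apply _ _ _ _ (nbfi_S_meas x)]
  refine ⟨?_, ?_, ?_, ?_⟩
  · -- case x < 0
    intro hx
    have he : {a | |Fi a - Fj a| ≤ x} = (∅ : Set Ω) := by
      ext a
      simp only [Set.mem_setOf_eq, Set.mem_empty_iff_false, iff_false, not_le]
      have := abs_nonneg (Fi a - Fj a)
      linarith
    rw [he, measure_empty]
  · -- case 0 ≤ x < |ωj - ωi|
    intro hx0 hx1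
    rcases le_total ωi ωj with hij | hij
    · rw [abs_of_nonneg (by linarith)] at hx1
      rw [hred, nbfi_M_eq B ωi ωj x (by linarith),
        nbfi_int2 B ωi ωj x hωj hBj hij hx0 hx1.le, nbfi_final _ _ _ hci hcj,
        min_eq_left hij]
      congr 1
      have h1 : B - 2 * ωi ≠ 0 := by linarith
      have h2 : B - 2 * ωj ≠ 0 := by linarith
      field_simp
    · rw [abs_of_nonpos (by linarith)] at hx1
      rw [hred, nbfi_swap, nbfi_M_eq B ωj ωi x (by linarith),
        nbfi_int2 B ωj ωi x hωi hBi hij hx0 (by linarith), nbfi_final _ _ _ hci hcj,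
        min_eq_right hij]
      congr 1
      have h1 : B - 2 * ωi ≠ 0 := by linarith
      have h2 : B - 2 * ωj ≠ 0 := by linarith
      field_simp
  · -- middle case
    intro hx1 hx2
    rcases le_total ωi ωj with hij | hij
    · rw [abs_of_nonneg (by linarith)] at hx1
      rw [hred, nbfi_M_eq B ωi ωj x (by linarith),
        nbfi_int3 B ωi ωj x hωi hωj hBi hBj hij hx1 hx2, nbfi_final _ _ _ hci hcj]
    · rw [abs_of_nonpos (by linarith)] at hx1
      rw [hred, nbfi_swap, nbfi_M_eq B ωj ωi x (by linarith),
        nbfi_int3 B ωj ωi x hωj hωi hBj hBi hij (by linarith) (by linarith),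
        nbfi_final _ _ _ hci hcj]
      congr 1
      ring
  · -- case x ≥ B - ωj - ωi
    intro hx4
    have hs : MeasurableSet {a | |Fi a - Fj a| ≤ x} :=
      measurableSet_le (hFi.sub hFj).abs measurable_const
    refine (prob_compl_eq_zero_iff hs).1 ?_
    have hnulli : P (Fi ⁻¹' (Set.Icc ωi (B - ωi))ᶜ) = 0 := by
      rw [← Measure.map_apply hFi measurableSet_Icc.compl, hunifi, Measure.smul_apply,
        Measure.restrict_apply measurableSet_Icc.compl, Set.compl_inter_self, measure_empty,
        smul_zero]
    have hnullj : P (Fj ⁻¹' (Set.Icc ωj (B - ωj))ᶜ) = 0 := by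
      rw [← Measure.map_apply hFj measurableSet_Icc.compl, hunifj, Measure.smul_apply,
        Measure.restrict_apply measurableSet_Icc.compl, Set.compl_inter_self, measure_empty,
        smul_zero]
    refine measure_mono_null ?_ (measure_union_null hnulli hnullj)
    intro a ha
    simp only [Set.mem_compl_iff, Set.mem_setOf_eq, not_le] at ha
    by_contra hc
    simp only [Set.mem_union, Set.mem_preimage, Set.mem_compl_iff, not_or, not_not] at hc
    obtain ⟨hci', hcj'⟩ := hc
    rw [Set.mem_Icc] at hci' hcj'
    have : |Fi a - Fj a| ≤ x :=
      abs_le.mpr ⟨by linarith [hci'.1, hcj'.2], by linarith [hci'.2, hcj'.1]⟩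
    linarith
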